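/- For binary DRPM, for every deterministic selection of the randomized symbols the induced input distribution deviates from the target by at most the largest message probability: for any function e : [M] → {0,1} satisfying e(i) = 0 whenever I_i ⊆ J_0 and e(i) = 1 whenever I_i ⊆ J_1 (with e arbitrary on messages whose interval meets both J_0 and J_1), one has | Σ_{i=1}^{M} π(i)·1[e(i)=x] − P_X(x) | ≤ max_{i∈[M]} π(i) for each x ∈ {0,1}. -/
import Mathlib


open Finset

/-- For binary DRPM, every deterministic selection of the
randomized symbols induces an input distribution deviating from the target by
at most the largest message probability: if `e : [M] → {0,1}` satisfies
`e(i) = 0` whenever `I_i ⊆ J_0` and `e(i) = 1` whenever `I_i ⊆ J_1`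
(with `e` arbitrary on messages whose interval meets both), then
`|Σ_i π(i)·1[e(i)=x] − P_X(x)| ≤ max_i π(i)` for each `x ∈ {0,1}`.
Here `I_i = [Σ_{j<i} π(j), Σ_{j<i} π(j) + π(i))`, `J_0 = [0, P_X(0))`,
`J_1 = [P_X(0), 1)`. -/
theorem drpm_deterministic_selection_deviation
    {M : ℕ} (hM : 1 ≤ M)
    (π : Fin M → ℝ) (hπpos : ∀ i, 0 < π i) (hπsum : ∑ i, π i = 1)
    (PX : Fin 2 → ℝ) (hPXnonneg : ∀ x, 0 ≤ PX x) (hPXsum : PX 0 + PX 1 = 1)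
    (e : Fin M → Fin 2)
    (he0 : ∀ i : Fin M,
      Set.Ico (∑ j ∈ Finset.univ.filter (fun j => j < i), π j)
          ((∑ j ∈ Finset.univ.filter (fun j => j < i), π j) + π i)
        ⊆ Set.Ico (0:ℝ) (PX 0) → e i = 0)
    (he1 : ∀ i : Fin M,
      Set.Ico (∑ j ∈ Finset.univ.filter (fun j => j < i), π j)
          ((∑ j ∈ Finset.univ.filter (fun j => j < i), π j) + π i)
        ⊆ Set.Ico (PX 0) (1:ℝ) → e i = 1)
    (x : Fin 2) :
    |(∑ i : Fin M, if e i = x then π i else 0) - PX x|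
      ≤ Finset.univ.sup' ⟨⟨0, hM⟩, Finset.mem_univ _⟩ π := by
  classical
  have h01 : ∀ y : Fin 2, y = 0 ∨ y = 1 := by decide
  set S : Fin M → ℝ := fun i => ∑ j ∈ Finset.univ.filter (fun j => j < i), π j with hSdef
  have hSnonneg : ∀ i, 0 ≤ S i := fun i => Finset.sum_nonneg fun j _ => (hπpos j).le
  have hseg : ∀ i : Fin M,
      S i + π i = ∑ j ∈ insert i (Finset.univ.filter (fun j => j < i)), π j := by
    intro i
    rw [Finset.sum_insert (by simp)]
    simp only [hSdef]
    ring
  have hstep : ∀ i k : Fin M, i < k → S i + π i ≤ S k := by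
    intro i k hik
    rw [hseg i]
    apply Finset.sum_le_sum_of_subset_of_nonneg
    · intro j hj
      simp only [Finset.mem_insert, Finset.mem_filter, Finset.mem_univ, true_and] at hj ⊢
      rcases hj with rfl | hj
      · exact hik
      · exact hj.trans hik
    · exact fun j _ _ => (hπpos j).le
  have hSle1 : ∀ i : Fin M, S i + π i ≤ 1 := by
    intro i
    rw [hseg i, ← hπsum]
    exact Finset.sum_le_sum_of_subset_of_nonneg (Finset.subset_univ _)
      (fun j _ _ => (hπpos j).le)
  have hPX0le1 : PX 0 ≤ 1 := by have := hPXnonneg 1; linarith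
  have hS0 : S ⟨0, hM⟩ = 0 := by
    apply Finset.sum_eq_zero
    intro j hj
    exact absurd ((Finset.mem_filter.mp hj).2) (by simp [Fin.lt_def])
  set T : Finset (Fin M) := Finset.univ.filter (fun i => S i ≤ PX 0) with hT
  have hTne : T.Nonempty := ⟨⟨0, hM⟩, by simp [hT, hS0, hPXnonneg 0]⟩
  set k : Fin M := T.max' hTne with hkdef
  have hkS : S k ≤ PX 0 := by
    have := T.max'_mem hTne
    simp only [hT, Finset.mem_filter] at this
    exact this.2
  have hk2 : ∀ i : Fin M, k < i → PX 0 < S i := by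
    intro i hi
    by_contra h
    push_neg at h
    have hmem : i ∈ T := by simp [hT, h]
    exact absurd (T.le_max' i hmem) (not_le.mpr hi)
  have hei0 : ∀ i : Fin M, i < k → e i = 0 := by
    intro i hi
    exact he0 i (Set.Ico_subset_Ico (hSnonneg i) (le_trans (hstep i k hi) hkS))
  have hei1 : ∀ i : Fin M, k < i → e i = 1 := by
    intro i hi
    exact he1 i (Set.Ico_subset_Ico (hk2 i hi).le (hSle1 i))
  have hkupper : PX 0 ≤ S k + π k := by
    by_cases hlast : (k : ℕ) + 1 < M
    · have hlt : k < (⟨(k : ℕ) + 1, hlast⟩ : Fin M) := by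
        simp [Fin.lt_def]
      have heq : Finset.univ.filter (fun j => j < (⟨(k : ℕ) + 1, hlast⟩ : Fin M))
          = insert k (Finset.univ.filter (fun j => j < k)) := by
        ext j
        simp only [Finset.mem_insert, Finset.mem_filter, Finset.mem_univ, true_and,
          Fin.lt_def, Fin.ext_iff]
        omega
      have hval : S (⟨(k : ℕ) + 1, hlast⟩ : Fin M) = S k + π k := by
        rw [hseg k, hSdef]
        simp only
        rw [heq]
      have := hk2 _ hlt
      linarith
    · have heq : insert k (Finset.univ.filter (fun j => j < k)) = Finset.univ := by
        ext j
        simp only [Finset.mem_insert, Finset.mem_filter, Finset.mem_univ, true_and,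
          Fin.lt_def, Fin.ext_iff, iff_true]
        have h1 := j.isLt
        have h2 := k.isLt
        omega
      have hval : S k + π k = 1 := by rw [hseg k, heq, hπsum]
      linarith
  have hA0lower : S k ≤ ∑ i : Fin M, if e i = (0 : Fin 2) then π i else 0 := by
    calc S k = ∑ j ∈ Finset.univ.filter (fun j => j < k),
          (if e j = (0 : Fin 2) then π j else 0) := by
          rw [hSdef]
          apply Finset.sum_congr rfl
          intro j hj
          rw [hei0 j (Finset.mem_filter.mp hj).2]
          simp
      _ ≤ _ := Finset.sum_le_sum_of_subset_of_nonneg (Finset.subset_univ _)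
          (fun j _ _ => by split_ifs with h; exacts [(hπpos j).le, le_rfl])
  have hA0upper : (∑ i : Fin M, if e i = (0 : Fin 2) then π i else 0) ≤ S k + π k := by
    have hsplit : (∑ i : Fin M, if e i = (0 : Fin 2) then π i else 0)
        = ∑ i ∈ Finset.univ.filter (fun i => i ≤ k), (if e i = (0 : Fin 2) then π i else 0) := by
      symm
      apply Finset.sum_subset (Finset.subset_univ _)
      intro i _ hi
      simp only [Finset.mem_filter, Finset.mem_univ, true_and, not_le] at hi
      rw [hei1 i hi]
      simp
    have hfle : Finset.univ.filter (fun i => i ≤ k)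
        = insert k (Finset.univ.filter (fun i => i < k)) := by
      ext j
      simp only [Finset.mem_insert, Finset.mem_filter, Finset.mem_univ, true_and]
      constructor
      · intro h
        rcases lt_or_eq_of_le h with h | h
        exacts [Or.inr h, Or.inl h]
      · rintro (rfl | h)
        exacts [le_rfl, h.le]
    rw [hsplit, hfle, hseg k]
    exact Finset.sum_le_sum (fun i _ => by split_ifs with h; exacts [le_rfl, (hπpos i).le])
  have hπk_le : π k ≤ Finset.univ.sup' ⟨⟨0, hM⟩, Finset.mem_univ _⟩ π :=
    Finset.le_sup' π (Finset.mem_univ k)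
  rcases h01 x with rfl | rfl
  · rw [abs_le]
    constructor <;> linarith
  · have hsum01 : (∑ i : Fin M, if e i = (0 : Fin 2) then π i else 0)
        + (∑ i : Fin M, if e i = (1 : Fin 2) then π i else 0) = 1 := by
      rw [← Finset.sum_add_distrib, ← hπsum]
      apply Finset.sum_congr rfl
      intro i _
      rcases h01 (e i) with h | h <;> simp [h]
    have hPX1 : PX 1 = 1 - PX 0 := by linarith
    rw [abs_le]
    constructor <;> linarith
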